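/- arXiv:1411.6265 — 2 statements merged into one kernel-verified Lean document; each statement's English description precedes it below -/
import Mathlib

section
/- For all complex-relevant reals a, b, c, g ∈ ℝ, one has |e^{(a+bi)g} − e^{cig}| ≤ (|b − c| + |a|) · e^{|ga|} · |g|, where the modulus is taken in ℂ. -/
open Complex

theorem stmt_9 (a b c g : ℝ) :
    ‖Complex.exp ((a + b * I) * g) - Complex.exp (c * I * g)‖ ≤
      (|b - c| + |a|) * Real.exp |g * a| * |g| := by
  set z : ℂ := (a + b * I) * g with hz
  set w : ℂ := c * I * g with hw
  set K : ℝ := Real.exp |g * a| with hK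
  have hseg : ∀ x ∈ segment ℝ w z, ‖Complex.exp x‖ ≤ K := by
    rintro x ⟨u, v, hu, hv, huv, rfl⟩
    rw [Complex.norm_exp]
    apply Real.exp_le_exp.2
    have hre : (u • w + v • z).re = v * (a * g) := by
      simp only [hw, hz, Complex.add_re, Complex.mul_re, Complex.smul_re, Complex.add_im,
        Complex.mul_im, Complex.ofReal_re, Complex.ofReal_im, Complex.I_re, Complex.I_im, smul_eq_mul]
      ring
    rw [hre]
    calc v * (a * g) ≤ |v * (a * g)| := le_abs_self _
      _ = v * |a * g| := by rw [abs_mul, _root_.abs_of_nonneg hv]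
      _ ≤ 1 * |a * g| := by
          exact mul_le_mul_of_nonneg_right (by linarith) (abs_nonneg _)
      _ = |g * a| := by rw [one_mul, mul_comm]
  have hderiv : ∀ x ∈ segment ℝ w z,
      HasFDerivWithinAt Complex.exp
        (((1 : ℂ →L[ℂ] ℂ).smulRight (Complex.exp x)).restrictScalars ℝ)
        (segment ℝ w z) x := by
    intro x hx
    exact ((Complex.hasDerivAt_exp x).hasFDerivAt.restrictScalars ℝ).hasFDerivWithinAt
  have hbound : ∀ x ∈ segment ℝ w z,
      ‖((1 : ℂ →L[ℂ] ℂ).smulRight (Complex.exp x)).restrictScalars ℝ‖ ≤ K := by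
    intro x hx
    rw [ContinuousLinearMap.norm_restrictScalars, ContinuousLinearMap.norm_smulRight_apply,
      norm_one, one_mul]
    exact hseg x hx
  have hmvt := (convex_segment w z).norm_image_sub_le_of_norm_hasFDerivWithin_le
    hderiv hbound (left_mem_segment ℝ w z) (right_mem_segment ℝ w z)
  have hdist : ‖z - w‖ ≤ (|b - c| + |a|) * |g| := by
    have : z - w = ((a : ℂ) + (b - c) * I) * g := by
      rw [hz, hw]; ring
    rw [this, norm_mul, Complex.norm_real, Real.norm_eq_abs]
    apply mul_le_mul_of_nonneg_right _ (abs_nonneg g)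
    calc ‖(a : ℂ) + (b - c) * I‖ ≤ ‖(a : ℂ)‖ + ‖((b - c) : ℂ) * I‖ := norm_add_le _ _
      _ = |a| + |b - c| := by
          rw [norm_mul, Complex.norm_I, mul_one, ← Complex.ofReal_sub, Complex.norm_real,
            Complex.norm_real, Real.norm_eq_abs, Real.norm_eq_abs]
      _ = |b - c| + |a| := by ring
  calc ‖Complex.exp z - Complex.exp w‖ ≤ K * ‖z - w‖ := hmvt
    _ ≤ K * ((|b - c| + |a|) * |g|) := by
        exact mul_le_mul_of_nonneg_left hdist (Real.exp_nonneg _)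
    _ = (|b - c| + |a|) * K * |g| := by ring
end

section
/- Let f : [0,∞) → ℝ be convex and g : [0,∞) → ℝ be arbitrary. Let x₀ be a minimizer of f, let y₀ > 0 and 0 < ε < y₀. If 2·max_{v∈{0,−1,1}} |g(y₀+εv) − f(y₀+εv)| < min_{u∈{−1,1}} [g(y₀+εu) − g(y₀)], then |x₀ − y₀| ≤ ε. -/
theorem stmt_16 (f g : ℝ → ℝ) (hf : ConvexOn ℝ (Set.Ici 0) f)
    (x₀ : ℝ) (hx₀ : x₀ ∈ Set.Ici (0 : ℝ)) (hmin : ∀ x ∈ Set.Ici (0 : ℝ), f x₀ ≤ f x)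
    (y₀ ε : ℝ) (hy₀ : 0 < y₀) (hε : 0 < ε) (hεy : ε < y₀)
    (h : 2 * max (|g y₀ - f y₀|)
          (max (|g (y₀ + ε) - f (y₀ + ε)|) (|g (y₀ - ε) - f (y₀ - ε)|)) <
        min (g (y₀ + ε) - g y₀) (g (y₀ - ε) - g y₀)) :
    |x₀ - y₀| ≤ ε := by
  have h0 : |g y₀ - f y₀| ≤ max (|g y₀ - f y₀|)
      (max (|g (y₀ + ε) - f (y₀ + ε)|) (|g (y₀ - ε) - f (y₀ - ε)|)) := le_max_left _ _
  have h1 : |g (y₀ + ε) - f (y₀ + ε)| ≤ max (|g y₀ - f y₀|)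
      (max (|g (y₀ + ε) - f (y₀ + ε)|) (|g (y₀ - ε) - f (y₀ - ε)|)) :=
    le_trans (le_max_left _ _) (le_max_right _ _)
  have h2 : |g (y₀ - ε) - f (y₀ - ε)| ≤ max (|g y₀ - f y₀|)
      (max (|g (y₀ + ε) - f (y₀ + ε)|) (|g (y₀ - ε) - f (y₀ - ε)|)) :=
    le_trans (le_max_right _ _) (le_max_right _ _)
  have hm1 : min (g (y₀ + ε) - g y₀) (g (y₀ - ε) - g y₀) ≤ g (y₀ + ε) - g y₀ := min_le_left _ _
  have hm2 : min (g (y₀ + ε) - g y₀) (g (y₀ - ε) - g y₀) ≤ g (y₀ - ε) - g y₀ := min_le_right _ _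
  have e0 := abs_le.mp (le_refl |g y₀ - f y₀|)
  have e1 := abs_le.mp (le_refl |g (y₀ + ε) - f (y₀ + ε)|)
  have e2 := abs_le.mp (le_refl |g (y₀ - ε) - f (y₀ - ε)|)
  have hA : f y₀ < f (y₀ + ε) := by linarith [e0.1, e0.2, e1.1, e1.2]
  have hB : f y₀ < f (y₀ - ε) := by linarith [e0.1, e0.2, e2.1, e2.2]
  have hy₀S : y₀ ∈ Set.Ici (0:ℝ) := le_of_lt hy₀
  have hfy : f x₀ ≤ f y₀ := hmin y₀ hy₀S
  by_contra hc
  push_neg at hc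
  rcases lt_abs.mp hc with h1' | h2'
  · -- x₀ > y₀ + ε
    have hseg : y₀ + ε ∈ segment ℝ y₀ x₀ := by
      rw [segment_eq_Icc (by linarith : y₀ ≤ x₀)]
      constructor <;> linarith
    have := hf.le_on_segment hy₀S hx₀ hseg
    rw [max_eq_left hfy] at this
    linarith
  · -- x₀ < y₀ - ε
    have hseg : y₀ - ε ∈ segment ℝ x₀ y₀ := by
      rw [segment_eq_Icc (by linarith : x₀ ≤ y₀)]
      constructor <;> linarith
    have := hf.le_on_segment hx₀ hy₀S hseg
    rw [max_eq_right hfy] at this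
    linarith
end
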